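/- Let O be the valuation ring of a finite extension of ℚ_p. Let 0 → (M'_n) → (M_n) → (M''_n) → 0 be a short exact sequence of projective systems of finitely generated O-modules (exact at each level n, compatible with transition maps). If the Kobayashi ranks ∇M'_n and ∇M''_n are both defined for some n (i.e., the transition maps have finite kernel and cokernel), then ∇M_n is defined and ∇M_n = ∇M'_n + ∇M''_n. -/

import Mathlib

open Order

section OrderAux

variable {β γ : Type*} [PartialOrder β] [PartialOrder γ]

lemma aux_height_add_one_le {a b : β} (h : a < b) : height a + 1 ≤ height b := by
  rw [height_eq_iSup_lt_height b]
  exact le_iSup₂_of_le a h le_rfl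

lemma aux_length_le_height_prod (p : LTSeries (β × γ)) :
    (p.length : ℕ∞) ≤ height p.last.1 + height p.last.2 := by
  induction' hn : p.length with n ih generalizing p
  case zero => simp
  case succ =>
    have hne : p.length ≠ 0 := by omega
    have h1 : p.eraseLast.length = n := by simp [hn]
    have h2 := ih p.eraseLast h1
    have hlt : p.eraseLast.last < p.last := p.eraseLast_last_rel_last hne
    have key : (n : ℕ∞) + 1 ≤ height p.last.1 + height p.last.2 := by
      rcases Prod.lt_iff.mp hlt with ⟨h3, h4⟩ | ⟨h3, h4⟩
      · calc (n : ℕ∞) + 1 ≤ (height p.eraseLast.last.1 + height p.eraseLast.last.2) + 1 :=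
              add_le_add_left h2 1
        _ = (height p.eraseLast.last.1 + 1) + height p.eraseLast.last.2 := by
              rw [add_right_comm]
        _ ≤ height p.last.1 + height p.last.2 :=
              add_le_add (aux_height_add_one_le h3) (height_mono h4)
      · calc (n : ℕ∞) + 1 ≤ (height p.eraseLast.last.1 + height p.eraseLast.last.2) + 1 :=
              add_le_add_left h2 1
        _ = height p.eraseLast.last.1 + (height p.eraseLast.last.2 + 1) := by
              rw [add_assoc]
        _ ≤ height p.last.1 + height p.last.2 :=
              add_le_add (height_mono h3) (aux_height_add_one_le h4)
    have hc : ((n + 1 : ℕ) : ℕ∞) = (n : ℕ∞) + 1 := by push_cast; ring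
    rw [hc]
    exact key

lemma aux_height_Iic (s : β) :
    height (⟨s, le_rfl⟩ : {x : β // x ≤ s}) = height s := by
  apply le_antisymm
  · apply height_le
    intro p hp
    have hsm : StrictMono (Subtype.val : {x : β // x ≤ s} → β) := fun _ _ h => h
    have := length_le_height (p := p.map _ hsm) (x := s)
    simp only [LTSeries.last_map, LTSeries.map_length] at this
    exact this (by rw [hp])
  · apply height_le
    intro p hp
    let q : LTSeries {x : β // x ≤ s} :=
      ⟨p.length, fun i => ⟨p i, hp ▸ p.monotone (Fin.le_last i)⟩, fun i => p.step i⟩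
    have hq : q.last = ⟨s, le_rfl⟩ := Subtype.ext (by simpa [q, RelSeries.last] using hp)
    simpa using length_le_height (le_of_eq hq)

lemma aux_coheight_Ici [OrderTop β] (s : β) :
    height (⟨⊤, le_top⟩ : {x : β // s ≤ x}) = coheight s := by
  apply le_antisymm
  · apply height_le
    intro p _
    have hsm : StrictMono (Subtype.val : {x : β // s ≤ x} → β) := fun _ _ h => h
    have hhead : s ≤ (p.map _ hsm).head := p.head.2
    rcases eq_or_lt_of_le hhead with heq | hlt
    · have := length_le_coheight_head (p := p.map _ hsm)
      rw [← heq] at this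
      simpa using this
    · have := length_le_coheight_head (p := (p.map _ hsm).cons s hlt)
      rw [RelSeries.head_cons] at this
      simp only [RelSeries.cons_length, LTSeries.map_length] at this
      exact le_trans (by exact_mod_cast Nat.le_succ p.length) this
  · apply coheight_le
    intro p hp
    let q : LTSeries {x : β // s ≤ x} :=
      ⟨p.length, fun i => ⟨p i, hp ▸ p.monotone (Fin.zero_le i)⟩, fun i => p.step i⟩
    have hq : q.last ≤ ⟨⊤, le_top⟩ := le_top (α := β)
    simpa using length_le_height hq

lemma aux_height_top_eq {L : Type*} [Lattice L] [IsModularLattice L] [BoundedOrder L] (s : L) :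
    height (⊤ : L) = height s + coheight s := by
  apply le_antisymm
  · apply height_le
    intro p hp
    have hm : StrictMono (fun x : L =>
        ((⟨x ⊓ s, inf_le_right⟩ : {x : L // x ≤ s}),
         (⟨x ⊔ s, le_sup_right⟩ : {x : L // s ≤ x}))) := by
      intro a b hab
      have h := strictMono_inf_prod_sup (z := s) hab
      rcases Prod.lt_iff.mp h with ⟨h1, h2⟩ | ⟨h1, h2⟩
      · exact Prod.lt_iff.mpr (Or.inl ⟨h1, h2⟩)
      · exact Prod.lt_iff.mpr (Or.inr ⟨h1, h2⟩)
    have h2 := aux_length_le_height_prod (p.map _ hm)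
    simp only [LTSeries.last_map, LTSeries.map_length] at h2
    rw [hp] at h2
    have e1 : (⟨⊤ ⊓ s, inf_le_right⟩ : {x : L // x ≤ s}) = ⟨s, le_rfl⟩ :=
      Subtype.ext (top_inf_eq s)
    have e2 : (⟨⊤ ⊔ s, le_sup_right⟩ : {x : L // s ≤ x}) = ⟨⊤, le_top⟩ :=
      Subtype.ext (top_sup_eq s)
    calc (p.length : ℕ∞) ≤ _ := h2
      _ = height s + coheight s := by rw [e1, e2, aux_height_Iic, aux_coheight_Ici]
  · have e1 : Order.krullDim L = ((height (⊤ : L) : ℕ∞) : WithBot ℕ∞) := by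
      rw [krullDim_eq_iSup_height_of_nonempty]
      congr 1
      exact le_antisymm (iSup_le fun a => height_mono le_top) (le_iSup _ ⊤)
    have e2 := krullDim_eq_iSup_height_add_coheight_of_nonempty (α := L)
    have e3 : ((⨆ a : L, height a + coheight a : ℕ∞) : WithBot ℕ∞)
        = ((height (⊤ : L) : ℕ∞) : WithBot ℕ∞) := by rw [← e2, e1]
    have e4 : (⨆ a : L, height a + coheight a : ℕ∞) = height (⊤ : L) :=
      WithBot.coe_injective e3
    rw [← e4]
    exact le_iSup (fun a : L => height a + coheight a) s

end OrderAux

/-- The length of an `O`-module, as the Krull dimension of its lattice of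
submodules, truncated to a natural number. -/
noncomputable def lengthO (O M : Type*) [CommRing O] [AddCommGroup M] [Module O M] : ℕ :=
  (WithBot.unbotD 0 (Order.krullDim (Submodule O M))).toNat

section LengthAux

variable {O : Type*} [CommRing O]

/-- The length as an element of `ℕ∞`. -/
noncomputable def lenE (O M : Type*) [CommRing O] [AddCommGroup M] [Module O M] : ℕ∞ :=
  height (⊤ : Submodule O M)

lemma krullDim_eq_lenE (M : Type*) [AddCommGroup M] [Module O M] :
    Order.krullDim (Submodule O M) = ((lenE O M : ℕ∞) : WithBot ℕ∞) := by
  rw [krullDim_eq_iSup_height_of_nonempty]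
  congr 1
  exact le_antisymm (iSup_le fun a => height_mono le_top) (le_iSup _ ⊤)

lemma lengthO_eq_lenE (M : Type*) [AddCommGroup M] [Module O M] :
    lengthO O M = (lenE O M).toNat := by
  unfold lengthO
  rw [krullDim_eq_lenE (O := O) M, WithBot.unbotD_coe]

lemma lenE_congr {A B : Type*} [AddCommGroup A] [Module O A] [AddCommGroup B] [Module O B]
    (e : A ≃ₗ[O] B) : lenE O A = lenE O B := by
  have h := height_orderIso (Submodule.orderIsoMapComap e) ⊤
  have ht : Submodule.orderIsoMapComap e ⊤ = (⊤ : Submodule O B) := by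
    simp [Submodule.orderIsoMapComap]
  rw [ht] at h
  exact h.symm

lemma lengthO_congr {A B : Type*} [AddCommGroup A] [Module O A] [AddCommGroup B] [Module O B]
    (e : A ≃ₗ[O] B) : lengthO O A = lengthO O B := by
  rw [lengthO_eq_lenE, lengthO_eq_lenE, lenE_congr e]

lemma lenE_add {A : Type*} [AddCommGroup A] [Module O A] (S : Submodule O A) :
    lenE O A = lenE O S + lenE O (A ⧸ S) := by
  have h1 : lenE O S = height S := by
    have h := height_orderIso (Submodule.MapSubtype.orderIso S) ⊤
    have ht : Submodule.MapSubtype.orderIso S ⊤ = ⟨S, le_rfl⟩ :=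
      Subtype.ext (by simpa [Submodule.MapSubtype.orderIso] using Submodule.map_subtype_top S)
    rw [ht] at h
    rw [lenE, ← h]
    exact aux_height_Iic S
  have h2 : lenE O (A ⧸ S) = coheight S := by
    have h := height_orderIso (Submodule.comapMkQRelIso S) ⊤
    have ht : Submodule.comapMkQRelIso S ⊤ = ⟨⊤, Set.mem_Ici.mpr le_top⟩ :=
      Subtype.ext (by simp [Submodule.comapMkQRelIso])
    rw [ht] at h
    rw [lenE, ← h]
    exact aux_coheight_Ici S
  rw [h1, h2, lenE, aux_height_top_eq S]

lemma lenE_ne_top {A : Type*} [AddCommGroup A] [Module O A] [Finite A] : lenE O A ≠ ⊤ := by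
  have : Finite (Submodule O A) := by
    have : Finite (Set A) := inferInstance
    exact Finite.of_injective (fun S : Submodule O A => (S : Set A)) SetLike.coe_injective
  have : Fintype (Submodule O A) := Fintype.ofFinite _
  have hb : lenE O A ≤ (Fintype.card (Submodule O A) : ℕ∞) := by
    apply height_le
    intro p _
    exact_mod_cast p.length_lt_card.le
  exact ne_top_of_le_ne_top (by simp) hb

lemma finite_of_sub_quot {A : Type*} [AddCommGroup A] [Module O A] (S : Submodule O A)
    [Finite S] [Finite (A ⧸ S)] : Finite A := by
  have h1 : Finite S.toAddSubgroup := ‹Finite S›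
  have h2 : Finite (A ⧸ S.toAddSubgroup) := ‹Finite (A ⧸ S)›
  exact Finite.of_addSubgroup_quotient (H := S.toAddSubgroup)

lemma lengthO_add {A : Type*} [AddCommGroup A] [Module O A] [Finite A] (S : Submodule O A) :
    lengthO O A = lengthO O S + lengthO O (A ⧸ S) := by
  have : Finite S := Subtype.finite
  have : Finite (A ⧸ S) := Quotient.finite _
  rw [lengthO_eq_lenE, lengthO_eq_lenE, lengthO_eq_lenE, lenE_add S,
    ENat.toNat_add lenE_ne_top lenE_ne_top]

end LengthAux

/-- Additivity of the Kobayashi rank `∇` in short exact sequences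
of projective systems of finitely generated modules over the valuation ring `O`
of a finite extension of `ℚ_p` (at a fixed level: transition maps `π', π, π''`
compatible with level-wise short exact sequences).  If `∇` is defined for the
outer two systems then it is defined for the middle one and `∇M = ∇M' + ∇M''`. -/
theorem stmt12 (p : ℕ) [Fact p.Prime]
    (O : Type*) [CommRing O] [IsDomain O] [IsDiscreteValuationRing O]
    [Algebra ℤ_[p] O] [Module.Finite ℤ_[p] O]
    (M' M M'' N' N N'' : Type*)
    [AddCommGroup M'] [Module O M'] [Module.Finite O M']
    [AddCommGroup M] [Module O M] [Module.Finite O M]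
    [AddCommGroup M''] [Module O M''] [Module.Finite O M'']
    [AddCommGroup N'] [Module O N'] [Module.Finite O N']
    [AddCommGroup N] [Module O N] [Module.Finite O N]
    [AddCommGroup N''] [Module O N''] [Module.Finite O N'']
    (f1 : M' →ₗ[O] M) (g1 : M →ₗ[O] M'')
    (f0 : N' →ₗ[O] N) (g0 : N →ₗ[O] N'')
    (hf1 : Function.Injective f1) (hg1 : Function.Surjective g1)
    (hex1 : LinearMap.range f1 = LinearMap.ker g1)
    (hf0 : Function.Injective f0) (hg0 : Function.Surjective g0)
    (hex0 : LinearMap.range f0 = LinearMap.ker g0)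
    (π' : M' →ₗ[O] N') (π : M →ₗ[O] N) (π'' : M'' →ₗ[O] N'')
    (hcomm1 : π.comp f1 = f0.comp π') (hcomm2 : π''.comp g1 = g0.comp π)
    (hker' : Finite (LinearMap.ker π')) (hcok' : Finite (N' ⧸ LinearMap.range π'))
    (hker'' : Finite (LinearMap.ker π'')) (hcok'' : Finite (N'' ⧸ LinearMap.range π'')) :
    Finite (LinearMap.ker π) ∧ Finite (N ⧸ LinearMap.range π) ∧
    ((lengthO O (LinearMap.ker π) : ℤ) - lengthO O (N ⧸ LinearMap.range π)
        + Module.finrank O N)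
      = ((lengthO O (LinearMap.ker π') : ℤ) - lengthO O (N' ⧸ LinearMap.range π')
            + Module.finrank O N')
        + ((lengthO O (LinearMap.ker π'') : ℤ) - lengthO O (N'' ⧸ LinearMap.range π'')
            + Module.finrank O N'') := by
  classical
  -- kernel-side restricted maps
  have hc1 : ∀ x ∈ LinearMap.ker π', f1 x ∈ LinearMap.ker π := by
    intro x hx
    have h := LinearMap.congr_fun hcomm1 x
    simp only [LinearMap.coe_comp, Function.comp_apply] at h
    simp only [LinearMap.mem_ker] at hx ⊢
    rw [h, hx, map_zero]
  have hb1 : ∀ x ∈ LinearMap.ker π, g1 x ∈ LinearMap.ker π'' := by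
    intro x hx
    have h := LinearMap.congr_fun hcomm2 x
    simp only [LinearMap.coe_comp, Function.comp_apply] at h
    simp only [LinearMap.mem_ker] at hx ⊢
    rw [h, hx, map_zero]
  let c : LinearMap.ker π' →ₗ[O] LinearMap.ker π := f1.restrict hc1
  let b : LinearMap.ker π →ₗ[O] LinearMap.ker π'' := g1.restrict hb1
  have hcb_mem : ∀ x : LinearMap.ker π', c x ∈ LinearMap.ker b := by
    intro x
    rw [LinearMap.mem_ker]
    apply Subtype.ext
    show g1 (f1 (x : M')) = (0 : M'')
    have hx : f1 (x : M') ∈ LinearMap.ker g1 := hex1 ▸ LinearMap.mem_range_self f1 (x : M')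
    exact LinearMap.mem_ker.mp hx
  let cb : LinearMap.ker π' →ₗ[O] LinearMap.ker b := c.codRestrict _ hcb_mem
  have hcb_inj : Function.Injective cb := by
    intro x y hxy
    apply Subtype.ext
    apply hf1
    exact congrArg (fun z : LinearMap.ker b => ((z : LinearMap.ker π) : M)) hxy
  have hcb_surj : Function.Surjective cb := by
    rintro ⟨⟨m, hm⟩, hm0⟩
    have hg1m : g1 m = 0 := congrArg Subtype.val (LinearMap.mem_ker.mp hm0)
    have hmr : m ∈ LinearMap.range f1 := hex1 ▸ LinearMap.mem_ker.mpr hg1m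
    obtain ⟨m', hm'⟩ := hmr
    have hπ'm' : π' m' = 0 := by
      apply hf0
      rw [map_zero]
      have h := LinearMap.congr_fun hcomm1 m'
      simp only [LinearMap.coe_comp, Function.comp_apply] at h
      rw [← h, hm']
      exact LinearMap.mem_ker.mp hm
    refine ⟨⟨m', LinearMap.mem_ker.mpr hπ'm'⟩, ?_⟩
    apply Subtype.ext
    apply Subtype.ext
    show f1 m' = m
    exact hm'
  have finkerb : Finite (LinearMap.ker b) := Finite.of_surjective cb hcb_surj
  have finK : Finite (LinearMap.ker π) := by
    have hr : Finite (LinearMap.range b) := Subtype.finite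
    have hq : Finite ((LinearMap.ker π) ⧸ LinearMap.ker b) :=
      Finite.of_equiv _ b.quotKerEquivRange.symm.toEquiv
    exact finite_of_sub_quot (LinearMap.ker b)
  -- cokernel-side maps
  have hle1 : LinearMap.range π' ≤ Submodule.comap f0 (LinearMap.range π) := by
    rintro y' ⟨m', rfl⟩
    simp only [Submodule.mem_comap]
    exact ⟨f1 m', by simpa using LinearMap.congr_fun hcomm1 m'⟩
  have hle2 : LinearMap.range π ≤ Submodule.comap g0 (LinearMap.range π'') := by
    rintro y ⟨m, rfl⟩
    simp only [Submodule.mem_comap]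
    exact ⟨g1 m, by simpa using LinearMap.congr_fun hcomm2 m⟩
  let γ : (N' ⧸ LinearMap.range π') →ₗ[O] (N ⧸ LinearMap.range π) :=
    Submodule.mapQ _ _ f0 hle1
  let ε : (N ⧸ LinearMap.range π) →ₗ[O] (N'' ⧸ LinearMap.range π'') :=
    Submodule.mapQ _ _ g0 hle2
  have hεsurj : Function.Surjective ε := by
    intro z
    obtain ⟨y'', rfl⟩ := Submodule.Quotient.mk_surjective _ z
    obtain ⟨y, rfl⟩ := hg0 y''
    exact ⟨Submodule.Quotient.mk y, Submodule.mapQ_apply _ _ _ _⟩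
  have hkerε : LinearMap.ker ε = LinearMap.range γ := by
    apply le_antisymm
    · rintro z hz
      obtain ⟨y, rfl⟩ := Submodule.Quotient.mk_surjective _ z
      rw [LinearMap.mem_ker, Submodule.mapQ_apply, Submodule.Quotient.mk_eq_zero] at hz
      obtain ⟨x'', hx''⟩ := hz
      obtain ⟨m, rfl⟩ := hg1 x''
      have h1 : g0 (y - π m) = 0 := by
        have h2 := LinearMap.congr_fun hcomm2 m
        simp only [LinearMap.coe_comp, Function.comp_apply] at h2
        rw [map_sub, ← hx'', h2, sub_self]
      have h3 : y - π m ∈ LinearMap.range f0 := hex0 ▸ LinearMap.mem_ker.mpr h1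
      obtain ⟨y', hy'⟩ := h3
      refine ⟨Submodule.Quotient.mk y', ?_⟩
      rw [Submodule.mapQ_apply, hy', Submodule.Quotient.eq]
      simpa using (LinearMap.range π).neg_mem (LinearMap.mem_range_self π m)
    · rintro z ⟨w, rfl⟩
      obtain ⟨y', rfl⟩ := Submodule.Quotient.mk_surjective _ w
      rw [LinearMap.mem_ker, Submodule.mapQ_apply, Submodule.mapQ_apply,
        Submodule.Quotient.mk_eq_zero]
      have h1 : f0 y' ∈ LinearMap.ker g0 := hex0 ▸ LinearMap.mem_range_self f0 y'
      rw [LinearMap.mem_ker.mp h1]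
      exact Submodule.zero_mem _
  have finrγ : Finite (LinearMap.range γ) :=
    Finite.of_surjective γ.rangeRestrict γ.surjective_rangeRestrict
  have finkerε : Finite (LinearMap.ker ε) :=
    Finite.of_equiv _ (LinearEquiv.ofEq _ _ hkerε.symm).toEquiv
  have finC : Finite (N ⧸ LinearMap.range π) := by
    have hq : Finite ((N ⧸ LinearMap.range π) ⧸ LinearMap.ker ε) :=
      Finite.of_equiv _ (ε.quotKerEquivOfSurjective hεsurj).symm.toEquiv
    exact finite_of_sub_quot (LinearMap.ker ε)
  -- the connecting construction
  let P : Submodule O M := Submodule.comap π (LinearMap.range f0)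
  let e0 : N' ≃ₗ[O] LinearMap.range f0 := LinearEquiv.ofInjective f0 hf0
  have hPmem : ∀ x ∈ P, π x ∈ LinearMap.range f0 := fun x hx => hx
  let πP : P →ₗ[O] LinearMap.range f0 := π.restrict hPmem
  let h : P →ₗ[O] N' := (e0.symm : LinearMap.range f0 →ₗ[O] N').comp πP
  have hkey : ∀ m : P, f0 (h m) = π (m : M) := by
    intro m
    have h1 : (e0 (h m) : N) = f0 (h m) := by simp only [e0, LinearEquiv.ofInjective_apply]
    have h2 : e0 (h m) = πP m := e0.apply_symm_apply (πP m)
    calc f0 (h m) = (e0 (h m) : N) := h1.symm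
      _ = (πP m : N) := by rw [h2]
      _ = π (m : M) := rfl
  let ψ : P →ₗ[O] (N' ⧸ LinearMap.range π') := (LinearMap.range π').mkQ.comp h
  have hbPmem : ∀ m : P, (g1.domRestrict P) m ∈ LinearMap.ker π'' := by
    intro m
    rw [LinearMap.mem_ker]
    have h2 := LinearMap.congr_fun hcomm2 (m : M)
    simp only [LinearMap.coe_comp, Function.comp_apply] at h2
    show π'' (g1 (m : M)) = 0
    rw [h2, ← hkey m]
    have h3 : f0 (h m) ∈ LinearMap.ker g0 := hex0 ▸ LinearMap.mem_range_self f0 (h m)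
    exact LinearMap.mem_ker.mp h3
  let bP : P →ₗ[O] LinearMap.ker π'' := (g1.domRestrict P).codRestrict _ hbPmem
  have hbPsurj : Function.Surjective bP := by
    rintro ⟨x, hx⟩
    obtain ⟨m, hm⟩ := hg1 x
    have hmP : m ∈ P := by
      show π m ∈ LinearMap.range f0
      rw [hex0, LinearMap.mem_ker]
      have h2 := LinearMap.congr_fun hcomm2 m
      simp only [LinearMap.coe_comp, Function.comp_apply] at h2
      rw [← h2, hm]
      exact LinearMap.mem_ker.mp hx
    exact ⟨⟨m, hmP⟩, Subtype.ext hm⟩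
  have hkerψ : LinearMap.ker bP ≤ LinearMap.ker ψ := by
    intro m hm
    have hg1m : g1 (m : M) = 0 := congrArg Subtype.val (LinearMap.mem_ker.mp hm)
    have hmr : (m : M) ∈ LinearMap.range f1 := hex1 ▸ LinearMap.mem_ker.mpr hg1m
    obtain ⟨m', hm'⟩ := hmr
    have hhm : h m = π' m' := by
      apply hf0
      rw [hkey m]
      have h1 := LinearMap.congr_fun hcomm1 m'
      simp only [LinearMap.coe_comp, Function.comp_apply] at h1
      rw [← hm']
      exact h1
    rw [LinearMap.mem_ker]
    show (LinearMap.range π').mkQ (h m) = 0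
    rw [hhm, Submodule.mkQ_apply, Submodule.Quotient.mk_eq_zero]
    exact LinearMap.mem_range_self π' m'
  let δQ : (P ⧸ LinearMap.ker bP) →ₗ[O] (N' ⧸ LinearMap.range π') :=
    Submodule.liftQ _ ψ hkerψ
  let eQ : (P ⧸ LinearMap.ker bP) ≃ₗ[O] LinearMap.ker π'' :=
    bP.quotKerEquivOfSurjective hbPsurj
  have hKP : LinearMap.ker π ≤ P := by
    intro k hk
    show π k ∈ LinearMap.range f0
    rw [LinearMap.mem_ker.mp hk]
    exact Submodule.zero_mem _
  let θ : LinearMap.ker π →ₗ[O] (P ⧸ LinearMap.ker bP) :=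
    (LinearMap.ker bP).mkQ.comp (Submodule.inclusion hKP)
  have hθker : LinearMap.ker θ = LinearMap.ker b := by
    ext k
    simp only [LinearMap.mem_ker, θ, LinearMap.coe_comp, Function.comp_apply,
      Submodule.mkQ_apply]
    rw [Submodule.Quotient.mk_eq_zero]
    constructor
    · intro hk
      have hg : g1 (k : M) = 0 := congrArg Subtype.val (LinearMap.mem_ker.mp hk)
      exact Subtype.ext hg
    · intro hk
      have hg : g1 (k : M) = 0 := congrArg Subtype.val hk
      exact LinearMap.mem_ker.mpr (Subtype.ext hg)
  have hθrange : LinearMap.range θ = LinearMap.ker δQ := by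
    apply le_antisymm
    · rintro z ⟨k, rfl⟩
      rw [LinearMap.mem_ker]
      show δQ ((LinearMap.ker bP).mkQ (Submodule.inclusion hKP k)) = 0
      rw [Submodule.mkQ_apply, Submodule.liftQ_apply]
      show (LinearMap.range π').mkQ (h (Submodule.inclusion hKP k)) = 0
      have hh0 : h (Submodule.inclusion hKP k) = 0 := by
        apply hf0
        rw [hkey, map_zero]
        exact LinearMap.mem_ker.mp k.2
      rw [hh0, map_zero]
    · intro q hq
      obtain ⟨m, rfl⟩ := Submodule.Quotient.mk_surjective _ q
      rw [LinearMap.mem_ker, Submodule.liftQ_apply] at hq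
      have hmem : h m ∈ LinearMap.range π' := by
        rwa [show ψ m = Submodule.Quotient.mk (h m) from rfl,
          Submodule.Quotient.mk_eq_zero] at hq
      obtain ⟨m', hm'⟩ := hmem
      have hπk : π ((m : M) - f1 m') = 0 := by
        rw [map_sub]
        have h1 := LinearMap.congr_fun hcomm1 m'
        simp only [LinearMap.coe_comp, Function.comp_apply] at h1
        rw [h1, hm', hkey m, sub_self]
      have hkP : (m : M) - f1 m' ∈ LinearMap.ker π := LinearMap.mem_ker.mpr hπk
      refine ⟨⟨(m : M) - f1 m', hkP⟩, ?_⟩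
      show (LinearMap.ker bP).mkQ (Submodule.inclusion hKP ⟨(m : M) - f1 m', hkP⟩)
        = Submodule.Quotient.mk m
      rw [Submodule.mkQ_apply, Submodule.Quotient.eq]
      rw [LinearMap.mem_ker]
      apply Subtype.ext
      show g1 ((((m : M) - f1 m') - (m : M))) = (0 : M'')
      have hf1m' : g1 (f1 m') = 0 := by
        have := hex1 ▸ LinearMap.mem_range_self f1 m'
        exact LinearMap.mem_ker.mp this
      rw [sub_sub_cancel_left, map_neg, hf1m', neg_zero]
  have hrangeδQ : LinearMap.range δQ = LinearMap.ker γ := by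
    apply le_antisymm
    · rintro z ⟨q, rfl⟩
      obtain ⟨m, rfl⟩ := Submodule.Quotient.mk_surjective _ q
      rw [Submodule.liftQ_apply, LinearMap.mem_ker]
      show γ ((LinearMap.range π').mkQ (h m)) = 0
      rw [Submodule.mkQ_apply, Submodule.mapQ_apply, hkey m, Submodule.Quotient.mk_eq_zero]
      exact LinearMap.mem_range_self π (m : M)
    · intro z hz
      obtain ⟨y', rfl⟩ := Submodule.Quotient.mk_surjective _ z
      rw [LinearMap.mem_ker, Submodule.mapQ_apply, Submodule.Quotient.mk_eq_zero] at hz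
      obtain ⟨m, hm⟩ := hz
      have hmP : m ∈ P := ⟨y', hm.symm⟩
      refine ⟨Submodule.Quotient.mk (⟨m, hmP⟩ : P), ?_⟩
      rw [Submodule.liftQ_apply]
      show (LinearMap.range π').mkQ (h ⟨m, hmP⟩) = Submodule.Quotient.mk y'
      have hy : h ⟨m, hmP⟩ = y' := by
        apply hf0
        rw [hkey]
        exact hm
      rw [hy, Submodule.mkQ_apply]
  -- length bookkeeping
  have finQ : Finite (P ⧸ LinearMap.ker bP) := Finite.of_equiv _ eQ.symm.toEquiv
  have E1 : lengthO O (LinearMap.ker π)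
      = lengthO O (LinearMap.ker π') + lengthO O ((LinearMap.ker π) ⧸ LinearMap.ker b) := by
    rw [lengthO_add (LinearMap.ker b)]
    rw [(lengthO_congr (LinearEquiv.ofBijective cb ⟨hcb_inj, hcb_surj⟩) : _)]
  have E2 : lengthO O (LinearMap.ker π'')
      = lengthO O ((LinearMap.ker π) ⧸ LinearMap.ker b) + lengthO O (LinearMap.ker γ) := by
    have h1 : lengthO O (LinearMap.ker π'') = lengthO O (P ⧸ LinearMap.ker bP) :=
      (lengthO_congr eQ).symm
    have e1 : lengthO O (LinearMap.ker δQ) = lengthO O (LinearMap.range θ) :=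
      (lengthO_congr (LinearEquiv.ofEq _ _ hθrange)).symm
    have e2 : lengthO O (LinearMap.range θ) = lengthO O ((LinearMap.ker π) ⧸ LinearMap.ker θ) :=
      (lengthO_congr θ.quotKerEquivRange).symm
    have e3 : lengthO O ((LinearMap.ker π) ⧸ LinearMap.ker θ)
        = lengthO O ((LinearMap.ker π) ⧸ LinearMap.ker b) :=
      lengthO_congr (Submodule.quotEquivOfEq _ _ hθker)
    have e4 : lengthO O ((P ⧸ LinearMap.ker bP) ⧸ LinearMap.ker δQ)
        = lengthO O (LinearMap.ker γ) := by
      rw [lengthO_congr (O := O) δQ.quotKerEquivRange,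
        lengthO_congr (O := O) (LinearEquiv.ofEq _ _ hrangeδQ)]
    rw [h1, lengthO_add (LinearMap.ker δQ), e1, e2, e3, e4]
  have E3 : lengthO O (N' ⧸ LinearMap.range π')
      = lengthO O (LinearMap.ker γ)
        + lengthO O ((N' ⧸ LinearMap.range π') ⧸ LinearMap.ker γ) :=
    lengthO_add _
  have E4 : lengthO O (N ⧸ LinearMap.range π)
      = lengthO O ((N' ⧸ LinearMap.range π') ⧸ LinearMap.ker γ)
        + lengthO O (N'' ⧸ LinearMap.range π'') := by
    have e1 : lengthO O (LinearMap.ker ε) = lengthO O (LinearMap.range γ) :=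
      lengthO_congr (LinearEquiv.ofEq _ _ hkerε)
    have e2 : lengthO O (LinearMap.range γ)
        = lengthO O ((N' ⧸ LinearMap.range π') ⧸ LinearMap.ker γ) :=
      (lengthO_congr γ.quotKerEquivRange).symm
    have e3 : lengthO O ((N ⧸ LinearMap.range π) ⧸ LinearMap.ker ε)
        = lengthO O (N'' ⧸ LinearMap.range π'') :=
      lengthO_congr (ε.quotKerEquivOfSurjective hεsurj)
    rw [lengthO_add (LinearMap.ker ε), e1, e2, e3]
  -- rank additivity
  have hrank : Module.finrank O N = Module.finrank O N' + Module.finrank O N'' := by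
    have hnoeth : IsNoetherian O N := isNoetherian_of_isNoetherianRing_of_finite O N
    have hfinker : Module.Finite O (LinearMap.ker g0) :=
      Module.Finite.iff_fg.mpr (IsNoetherian.noetherian _)
    have h1 := rank_quotient_add_rank_of_isDomain (R := O) (M := N) (LinearMap.ker g0)
    have h2 : Module.finrank O N
        = Module.finrank O (N ⧸ LinearMap.ker g0) + Module.finrank O (LinearMap.ker g0) := by
      rw [show Module.finrank O N = (Module.rank O N).toNat from rfl, ← h1,
        Cardinal.toNat_add (Module.rank_lt_aleph0 O _) (Module.rank_lt_aleph0 O _)]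
      rfl
    have e1 : (N ⧸ LinearMap.ker g0) ≃ₗ[O] N'' := g0.quotKerEquivOfSurjective hg0
    have e2 : N' ≃ₗ[O] LinearMap.ker g0 :=
      (LinearEquiv.ofInjective f0 hf0).trans (LinearEquiv.ofEq _ _ hex0)
    rw [h2, e1.finrank_eq, ← e2.finrank_eq]
    ring
  refine ⟨finK, finC, ?_⟩
  omega
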